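/- Let T be a tree with bipartition {A,B}, |A| = l+1 ≤ |B|, and let δ be the minimum degree in T over vertices of A. Let H = H₁ ∨ H₂ be the join of a graph H₁ on l vertices with a graph H₂ on n−l vertices. If the maximum degree of H₂ is at most δ−1 and at most one vertex of H₂ has degree exactly δ−1, then H contains no subgraph isomorphic to T. -/

import Mathlib

open scoped Classical

/-- `G` contains a copy of `T` (a subgraph isomorphic to `T`). -/
def ContainsCopy {V W : Type*} (T : SimpleGraph V) (G : SimpleGraph W) : Prop :=
  ∃ f : V → W, Function.Injective f ∧ ∀ ⦃a b⦄, T.Adj a b → G.Adj (f a) (f b)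

/-- The join `G ∨ H` of two graphs: their disjoint union together with all edges
between the two vertex sets. -/
def graphJoin {α β : Type*} (G : SimpleGraph α) (H : SimpleGraph β) : SimpleGraph (α ⊕ β) where
  Adj x y :=
    match x, y with
    | Sum.inl a, Sum.inl b => G.Adj a b
    | Sum.inr a, Sum.inr b => H.Adj a b
    | Sum.inl _, Sum.inr _ => True
    | Sum.inr _, Sum.inl _ => True
  symm := by
    constructor
    rintro (a|a) (b|b) h
    · exact G.symm.symm _ _ h
    · trivial
    · trivial
    · exact H.symm.symm _ _ h
  loopless := by
    constructor
    rintro (a|a) h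
    · exact G.loopless.irrefl a h
    · exact H.loopless.irrefl a h

lemma walk_parity' {V : Type*} {T : SimpleGraph V} (A : Finset V)
    (hbip : ∀ ⦃u v⦄, T.Adj u v → (u ∈ A ↔ v ∉ A)) :
    ∀ {x y : V} (p : T.Walk x y), Even p.length ↔ (x ∈ A ↔ y ∈ A) := by
  intro x y p
  induction p with
  | nil => simp
  | @cons x u y h q ih =>
    have hx := hbip h
    simp only [SimpleGraph.Walk.length_cons, Nat.even_add_one, ih]
    tauto

lemma parent_unique' {V : Type*} {T : SimpleGraph V} (hc : T.Connected) (ha : T.IsAcyclic)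
    {r x s₁ s₂ : V} (h₁ : T.Adj s₁ x) (h₂ : T.Adj s₂ x)
    (hd₁ : T.dist r s₁ + 1 = T.dist r x) (hd₂ : T.dist r s₂ + 1 = T.dist r x) : s₁ = s₂ := by
  obtain ⟨p₁, hp₁, hl₁⟩ := hc.exists_path_of_dist r s₁
  obtain ⟨p₂, hp₂, hl₂⟩ := hc.exists_path_of_dist r s₂
  have hq₁ : (p₁.concat h₁).length = T.dist r x := by
    rw [SimpleGraph.Walk.length_concat, hl₁, hd₁]
  have hq₂ : (p₂.concat h₂).length = T.dist r x := by
    rw [SimpleGraph.Walk.length_concat, hl₂, hd₂]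
  have hP₁ := (p₁.concat h₁).isPath_of_length_eq_dist hq₁
  have hP₂ := (p₂.concat h₂).isPath_of_length_eq_dist hq₂
  have heq := ha.path_unique ⟨p₁.concat h₁, hP₁⟩ ⟨p₂.concat h₂, hP₂⟩
  have he : p₁.concat h₁ = p₂.concat h₂ := congrArg Subtype.val heq
  obtain ⟨hv, -⟩ := SimpleGraph.Walk.concat_inj he
  exact hv

lemma adj_dist_step' {V : Type*} {T : SimpleGraph V} (hc : T.Connected) (A : Finset V)
    (hbip : ∀ ⦃u v⦄, T.Adj u v → (u ∈ A ↔ v ∉ A)) {r s w : V} (h : T.Adj s w) :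
    T.dist r s + 1 = T.dist r w ∨ T.dist r w + 1 = T.dist r s := by
  have hsw : T.dist s w = 1 := SimpleGraph.dist_eq_one_iff_adj.mpr h
  have hws : T.dist w s = 1 := SimpleGraph.dist_eq_one_iff_adj.mpr h.symm
  have h1 : T.dist r w ≤ T.dist r s + 1 := by
    have := hc.dist_triangle (u := r) (v := s) (w := w); omega
  have h2 : T.dist r s ≤ T.dist r w + 1 := by
    have := hc.dist_triangle (u := r) (v := w) (w := s); omega
  have hne : T.dist r s ≠ T.dist r w := by
    intro hEq
    obtain ⟨ps, -, hls⟩ := hc.exists_path_of_dist r s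
    obtain ⟨pw, -, hlw⟩ := hc.exists_path_of_dist r w
    have Es := walk_parity' A hbip ps
    have Ew := walk_parity' A hbip pw
    rw [hls] at Es
    rw [hlw] at Ew
    rw [hEq] at Es
    have := hbip h
    tauto
  omega

/-- Let `T` be a tree with bipartition `{A, B}`, `|A| = l+1 ≤ |B|`, and let `δ` be the
minimum degree in `T` over vertices of `A`.  Let `H = H₁ ∨ H₂` be the join of a graph
`H₁` on `l` vertices with a graph `H₂` on `n − l` vertices.  If the maximum degree of
`H₂` is at most `δ − 1` and at most one vertex of `H₂` has degree exactly `δ − 1`,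
then `H` contains no copy of `T`. -/
theorem tree_not_embeds_in_join_of_maxDegree_lt {V α β : Type*} [Fintype V] [Fintype α] [Fintype β]
    (T : SimpleGraph V) (hT : T.IsTree) (l n δ : ℕ)
    (A : Finset V) (hbip : ∀ ⦃u v⦄, T.Adj u v → (u ∈ A ↔ v ∉ A))
    (hA : A.card = l + 1) (hAB : A.card ≤ Aᶜ.card)
    (hδmin : ∀ v ∈ A, δ ≤ T.degree v) (hδmem : ∃ v ∈ A, T.degree v = δ)
    (H₁ : SimpleGraph α) (H₂ : SimpleGraph β)
    (hα : Fintype.card α = l) (hβ : Fintype.card β = n - l) (hln : l ≤ n)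
    (hmax : ∀ v : β, H₂.degree v ≤ δ - 1)
    (hone : ∀ u v : β, H₂.degree u = δ - 1 → H₂.degree v = δ - 1 → u = v) :
    ¬ ContainsCopy T (graphJoin H₁ H₂) := by
  classical
  rintro ⟨f, finj, fhom⟩
  have hconn := hT.isConnected
  have hacyc := hT.IsAcyclic
  -- δ ≥ 1
  have hδ1 : 1 ≤ δ := by
    obtain ⟨v, hv, hdeg⟩ := hδmem
    obtain ⟨z, hz⟩ := Finset.card_pos.mp (show 0 < Aᶜ.card by omega)
    have hzv : z ≠ v := fun h => (Finset.mem_compl.mp hz) (h ▸ hv)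
    rw [← hdeg, Nat.succ_le_iff, SimpleGraph.degree_pos_iff_exists_adj]
    obtain ⟨p⟩ := hconn.preconnected v z
    cases p with
    | nil => exact absurd rfl hzv
    | cons h q => exact ⟨_, h⟩
  -- sets
  set S : Finset V := A.filter (fun v => (f v).isRight) with hSdef
  set W : Finset V := Aᶜ.filter (fun v => (f v).isLeft) with hWdef
  have hleft : ∀ X : Finset V, (∀ v ∈ X, (f v).isLeft) → X.card ≤ l := by
    intro X hX
    rw [← Finset.card_image_of_injective X finj]
    have hsub : X.image f ⊆ Finset.univ.image Sum.inl := by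
      intro x hx
      obtain ⟨v, hv, rfl⟩ := Finset.mem_image.mp hx
      obtain ⟨a, ha⟩ := Sum.isLeft_iff.mp (hX v hv)
      rw [ha]; exact Finset.mem_image_of_mem _ (Finset.mem_univ _)
    calc (X.image f).card ≤ (Finset.univ.image Sum.inl).card := Finset.card_le_card hsub
      _ = Fintype.card α := by
          rw [Finset.card_image_of_injective _ Sum.inl_injective, Finset.card_univ]
      _ = l := hα
  have hSAcard : S.card + (A.filter (fun v => ¬ ((f v).isRight : Prop))).card = A.card :=
    Finset.card_filter_add_card_filter_not _
  have hAleft : ∀ v ∈ A.filter (fun v => ¬ ((f v).isRight : Prop)), (f v).isLeft := by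
    intro v hv
    have := (Finset.mem_filter.mp hv).2
    cases hfv : f v <;> simp_all
  have hSpos : 1 ≤ S.card := by
    have := hleft _ hAleft
    omega
  have hWcard : W.card + 1 ≤ S.card := by
    have hd : Disjoint (A.filter (fun v => ¬ ((f v).isRight : Prop))) W := by
      rw [Finset.disjoint_left]
      intro v hv hvW
      exact (Finset.mem_compl.mp (Finset.mem_filter.mp hvW).1) (Finset.mem_filter.mp hv).1
    have hle : ((A.filter (fun v => ¬ ((f v).isRight : Prop))) ∪ W).card ≤ l := by
      apply hleft
      intro v hv
      rcases Finset.mem_union.mp hv with h | h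
      · exact hAleft v h
      · exact (Finset.mem_filter.mp h).2
    rw [Finset.card_union_of_disjoint hd] at hle
    have hSA : S.card ≤ A.card := Finset.card_le_card (Finset.filter_subset _ _)
    omega
  obtain ⟨u₀, hu₀⟩ := Finset.card_pos.mp hSpos
  have hu₀A : u₀ ∈ A := (Finset.mem_filter.mp hu₀).1
  obtain ⟨b₀, hb₀⟩ := Sum.isRight_iff.mp (Finset.mem_filter.mp hu₀).2
  set g : V → β := fun v => ((f v).getRight?).getD b₀ with hgdef
  have hg : ∀ v ∈ S, f v = Sum.inr (g v) := by
    intro v hv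
    obtain ⟨b, hb⟩ := Sum.isRight_iff.mp (Finset.mem_filter.mp hv).2
    simp [hgdef, hb]
  -- degree bound
  have hdegbound : ∀ u ∈ S, δ ≤ (T.neighborFinset u ∩ W).card + H₂.degree (g u) := by
    intro u hu
    have huA : u ∈ A := (Finset.mem_filter.mp hu).1
    have h1 : δ ≤ T.degree u := hδmin u huA
    have hsplit : T.degree u = (T.neighborFinset u ∩ W).card + (T.neighborFinset u \ W).card := by
      rw [← SimpleGraph.card_neighborFinset_eq_degree]
      exact (Finset.card_inter_add_card_sdiff _ _).symm
    have h2 : (T.neighborFinset u \ W).card ≤ H₂.degree (g u) := by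
      have himg : (T.neighborFinset u \ W).image f ⊆ (H₂.neighborFinset (g u)).image Sum.inr := by
        intro x hx
        obtain ⟨v, hv, rfl⟩ := Finset.mem_image.mp hx
        obtain ⟨hvn, hvW⟩ := Finset.mem_sdiff.mp hv
        have hadj : T.Adj u v := by simpa using hvn
        have hvA : v ∉ A := (hbip hadj).mp huA
        have hnL : ¬ ((f v).isLeft : Prop) := by
          intro hL
          exact hvW (Finset.mem_filter.mpr ⟨Finset.mem_compl.mpr hvA, hL⟩)
        obtain ⟨b, hb⟩ : ∃ b, f v = Sum.inr b := by
          cases hfv : f v with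
          | inl a => rw [hfv] at hnL; simp at hnL
          | inr b => exact ⟨b, rfl⟩
        have hadj2 := fhom hadj
        rw [hg u hu, hb] at hadj2
        have hH : H₂.Adj (g u) b := hadj2
        rw [hb]
        exact Finset.mem_image_of_mem _ (by simpa using hH)
      calc (T.neighborFinset u \ W).card = ((T.neighborFinset u \ W).image f).card :=
            (Finset.card_image_of_injective _ finj).symm
        _ ≤ ((H₂.neighborFinset (g u)).image Sum.inr).card := Finset.card_le_card himg
        _ = H₂.degree (g u) := by
            rw [Finset.card_image_of_injective _ Sum.inr_injective,
              SimpleGraph.card_neighborFinset_eq_degree]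
    omega
  -- the edge set between S and W
  set E : Finset (V × V) := (S ×ˢ W).filter (fun p => T.Adj p.1 p.2) with hEdef
  have hEcard : E.card = ∑ u ∈ S, (T.neighborFinset u ∩ W).card := by
    rw [Finset.card_eq_sum_card_fiberwise
      (f := Prod.fst) (t := S)
      (fun p hp => (Finset.mem_product.mp (Finset.mem_filter.mp hp).1).1)]
    apply Finset.sum_congr rfl
    intro u hu
    have : E.filter (fun p => p.1 = u) = (T.neighborFinset u ∩ W).image (fun w => (u, w)) := by
      ext ⟨p1, p2⟩
      simp only [Finset.mem_filter, Finset.mem_product, Finset.mem_image, Finset.mem_inter,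
        SimpleGraph.mem_neighborFinset, hEdef, Prod.mk.injEq]
      constructor
      · rintro ⟨⟨⟨hp1, hp2⟩, hadj⟩, rfl⟩
        exact ⟨p2, ⟨hadj, hp2⟩, rfl, rfl⟩
      · rintro ⟨w, ⟨hadj, hw⟩, rfl, rfl⟩
        exact ⟨⟨⟨hu, hw⟩, hadj⟩, rfl⟩
    rw [this, Finset.card_image_of_injective]
    intro a b hab
    exact (Prod.mk.injEq _ _ _ _).mp hab |>.2
  -- disjointness of S and W
  have hdisj : ∀ x, x ∈ S → x ∈ W → False := by
    intro x hxS hxW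
    exact (Finset.mem_compl.mp (Finset.mem_filter.mp hxW).1) (Finset.mem_filter.mp hxS).1
  -- injection bound
  have hEbound : E.card + 1 ≤ S.card + W.card := by
    set φ : V × V → V := fun p => if T.dist u₀ p.1 < T.dist u₀ p.2 then p.2 else p.1 with hφdef
    have hmem : ∀ p ∈ E, T.Adj p.1 p.2 ∧ p.1 ∈ S ∧ p.2 ∈ W := by
      intro p hp
      obtain ⟨hps, hadj⟩ := Finset.mem_filter.mp hp
      obtain ⟨h1, h2⟩ := Finset.mem_product.mp hps
      exact ⟨hadj, h1, h2⟩
    -- characterization of φ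
    have hchar : ∀ p ∈ E,
        (φ p = p.2 ∧ T.dist u₀ p.1 + 1 = T.dist u₀ p.2) ∨
        (φ p = p.1 ∧ T.dist u₀ p.2 + 1 = T.dist u₀ p.1) := by
      intro p hp
      obtain ⟨hadj, h1, h2⟩ := hmem p hp
      rcases adj_dist_step' hconn A hbip (r := u₀) hadj with h | h
      · left
        refine ⟨?_, h⟩
        simp only [hφdef]
        rw [if_pos]; omega
      · right
        refine ⟨?_, h⟩
        simp only [hφdef]
        rw [if_neg]; omega
    have hsub : ∀ p ∈ E, φ p ∈ (S ∪ W).erase u₀ := by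
      intro p hp
      obtain ⟨hadj, h1, h2⟩ := hmem p hp
      rcases hchar p hp with ⟨hφ, hd⟩ | ⟨hφ, hd⟩
      · rw [hφ]
        refine Finset.mem_erase.mpr ⟨?_, Finset.mem_union_right _ h2⟩
        intro h
        exact hdisj u₀ hu₀ (h ▸ h2)
      · rw [hφ]
        refine Finset.mem_erase.mpr ⟨?_, Finset.mem_union_left _ h1⟩
        intro h
        have h0 : T.dist u₀ p.1 = 0 := by rw [h, SimpleGraph.dist_self]
        have : T.dist u₀ p.2 = 0 := by omega
        have : u₀ = p.2 := (hconn.dist_eq_zero_iff).mp this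
        exact hdisj u₀ hu₀ (this ▸ h2)
    have hinj : Set.InjOn φ E := by
      intro p hp q hq heq
      simp only [Finset.mem_coe] at hp hq
      obtain ⟨hadjp, hp1, hp2⟩ := hmem p hp
      obtain ⟨hadjq, hq1, hq2⟩ := hmem q hq
      rcases hchar p hp with ⟨hφp, hdp⟩ | ⟨hφp, hdp⟩ <;>
        rcases hchar q hq with ⟨hφq, hdq⟩ | ⟨hφq, hdq⟩
      · -- both picked second coordinate
        rw [hφp, hφq] at heq
        have h2 : p.1 = q.1 := by
          apply parent_unique' hconn hacyc (x := p.2) hadjp (heq ▸ hadjq) hdp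
          rw [heq]; exact hdq
        exact Prod.ext h2 heq
      · exfalso
        apply hdisj q.1 hq1
        rw [← hφq, ← heq, hφp]
        exact hp2
      · exfalso
        apply hdisj p.1 hp1
        rw [← hφp, heq, hφq]
        exact hq2
      · -- both picked first coordinate
        rw [hφp, hφq] at heq
        have h2 : p.2 = q.2 := by
          apply parent_unique' hconn hacyc (x := p.1) hadjp.symm (heq ▸ hadjq.symm) hdp
          rw [heq]; exact hdq
        exact Prod.ext heq h2
    have hcard := Finset.card_le_card_of_injOn φ hsub hinj
    have hdis : Disjoint S W := Finset.disjoint_left.mpr (fun hx hxS hxW => hdisj _ hxS hxW)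
    rw [Finset.card_erase_of_mem (Finset.mem_union_left _ hu₀),
      Finset.card_union_of_disjoint hdis] at hcard
    omega
  -- final counting
  by_cases hstar : ∃ u' ∈ S, H₂.degree (g u') = δ - 1
  · obtain ⟨u', hu'S, hu'⟩ := hstar
    have h1 : 1 ≤ (T.neighborFinset u' ∩ W).card := by
      have := hdegbound u' hu'S
      omega
    have hrest : ∀ u ∈ S.erase u', 2 ≤ (T.neighborFinset u ∩ W).card := by
      intro u hu
      have huS := Finset.mem_of_mem_erase hu
      have hne := Finset.ne_of_mem_erase hu
      have hb := hdegbound u huS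
      have hle := hmax (g u)
      have hne2 : H₂.degree (g u) ≠ δ - 1 := by
        intro h
        apply hne
        have hgeq := hone (g u) (g u') h hu'
        exact finj (by rw [hg u huS, hg u' hu'S, hgeq])
      omega
    have hsum : (S.erase u').card * 2 ≤ ∑ u ∈ S.erase u', (T.neighborFinset u ∩ W).card := by
      have := Finset.card_nsmul_le_sum (S.erase u')
        (fun u => (T.neighborFinset u ∩ W).card) 2 hrest
      simpa [smul_eq_mul] using this
    have hsplit : ∑ u ∈ S, (T.neighborFinset u ∩ W).card
        = (T.neighborFinset u' ∩ W).card + ∑ u ∈ S.erase u', (T.neighborFinset u ∩ W).card :=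
      (Finset.add_sum_erase S _ hu'S).symm
    have hcarde : (S.erase u').card = S.card - 1 := Finset.card_erase_of_mem hu'S
    omega
  · push_neg at hstar
    have hrest : ∀ u ∈ S, 2 ≤ (T.neighborFinset u ∩ W).card := by
      intro u hu
      have hb := hdegbound u hu
      have hle := hmax (g u)
      have hne2 := hstar u hu
      omega
    have hsum : S.card * 2 ≤ ∑ u ∈ S, (T.neighborFinset u ∩ W).card := by
      have := Finset.card_nsmul_le_sum S (fun u => (T.neighborFinset u ∩ W).card) 2 hrest
      simpa [smul_eq_mul] using this
    omega
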